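/- For every positive integer n, B*_{2n+1} = (-1)^n/4 + (1/√3)·sin((2n+1)π/3). -/

import Mathlib

open Finset Real

/-- The modified Bernoulli numbers of Zagier (as real numbers). -/
noncomputable def zagierBstar (n : ℕ) : ℝ :=
  ∑ r ∈ Finset.range (n + 1), ((n + r).choose (2 * r) : ℝ) * (bernoulli r : ℚ) / (n + r)

namespace ZagierAux

open Polynomial

noncomputable def fz : ℕ → Polynomial ℚ
  | 0 => C 2
  | 1 => X + C 2
  | (n+2) => (X + C 2) * fz (n+1) - fz n

def cz (m r : ℕ) : ℕ := (m+r).choose (2*r) + (m+r-1).choose (2*r)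

lemma cz_succ (m r : ℕ) : cz (m+1) r = (m+1+r).choose (2*r) + (m+r).choose (2*r) := by
  simp only [cz]
  rw [show m + 1 + r - 1 = m + r from by omega]

lemma cz_key (m r : ℕ) :
    cz (m+2) (r+1) + cz m (r+1) = cz (m+1) r + 2 * cz (m+1) (r+1) := by
  have e1 : cz (m+2) (r+1) = (m+r+3).choose (2*r+2) + (m+r+2).choose (2*r+2) := by
    simp only [cz]
    rw [show m + 2 + (r+1) - 1 = m + r + 2 from by omega,
        show m + 2 + (r+1) = m + r + 3 from by omega,
        show 2 * (r+1) = 2*r+2 from by omega]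
  have e2 : cz m (r+1) = (m+r+1).choose (2*r+2) + (m+r).choose (2*r+2) := by
    simp only [cz]
    rw [show m + (r+1) - 1 = m + r from by omega,
        show m + (r+1) = m + r + 1 from by omega,
        show 2 * (r+1) = 2*r+2 from by omega]
  have e3 : cz (m+1) r = (m+r+1).choose (2*r) + (m+r).choose (2*r) := by
    simp only [cz]
    rw [show m + 1 + r - 1 = m + r from by omega,
        show m + 1 + r = m + r + 1 from by omega]
  have e4 : cz (m+1) (r+1) = (m+r+2).choose (2*r+2) + (m+r+1).choose (2*r+2) := by
    simp only [cz]
    rw [show m + 1 + (r+1) - 1 = m + r + 1 from by omega,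
        show m + 1 + (r+1) = m + r + 2 from by omega,
        show 2 * (r+1) = 2*r+2 from by omega]
  rw [e1, e2, e3, e4]
  have p1 : (m+r+3).choose (2*r+2) = (m+r+2).choose (2*r+1) + (m+r+2).choose (2*r+2) :=
    Nat.choose_succ_succ _ _
  have p2 : (m+r+2).choose (2*r+1) = (m+r+1).choose (2*r) + (m+r+1).choose (2*r+1) :=
    Nat.choose_succ_succ _ _
  have p3 : (m+r+2).choose (2*r+2) = (m+r+1).choose (2*r+1) + (m+r+1).choose (2*r+2) :=
    Nat.choose_succ_succ _ _
  have p4 : (m+r+1).choose (2*r+1) = (m+r).choose (2*r) + (m+r).choose (2*r+1) :=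
    Nat.choose_succ_succ _ _
  have p5 : (m+r+1).choose (2*r+2) = (m+r).choose (2*r+1) + (m+r).choose (2*r+2) :=
    Nat.choose_succ_succ _ _
  omega

lemma coeff_fz : ∀ m r, (fz m).coeff r = (cz m r : ℚ) := by
  intro m
  induction m using Nat.twoStepInduction with
  | zero =>
    intro r
    match r with
    | 0 => simp [fz, cz]
    | (r+1) =>
      have h1 : (r+1).choose (2*(r+1)) = 0 := Nat.choose_eq_zero_of_lt (by omega)
      have h2 : (r).choose (2*(r+1)) = 0 := Nat.choose_eq_zero_of_lt (by omega)
      simp [fz, cz, h1]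
      rw [h2]
      simp
  | one =>
    intro r
    match r with
    | 0 => simp [fz, cz]
    | 1 => simp [fz, cz]
    | (r+2) =>
      have h1 : (r+3).choose (2*(r+2)) = 0 := Nat.choose_eq_zero_of_lt (by omega)
      have h2 : (r+2).choose (2*(r+2)) = 0 := Nat.choose_eq_zero_of_lt (by omega)
      simp [fz, cz, coeff_X]
      rw [show 1 + (r+2) = r + 3 by omega, h1, h2]
      simp
  | more n ih ih1 =>
    intro r
    have expand : (fz (n+2)).coeff r
        = (X * fz (n+1)).coeff r + 2 * (fz (n+1)).coeff r - (fz n).coeff r := by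
      rw [show fz (n+2) = (X + C 2) * fz (n+1) - fz n from rfl]
      simp [add_mul, coeff_sub, coeff_add, coeff_C_mul]
      try ring
    match r with
    | 0 =>
      rw [expand]
      simp [mul_coeff_zero, ih, ih1, cz]
      norm_num
    | (r+1) =>
      rw [expand, coeff_X_mul, ih, ih1, ih1]
      have := cz_key n r
      have cast := congrArg (fun x : ℕ => (x : ℚ)) this
      push_cast at cast ⊢
      linarith

noncomputable def L (p : Polynomial ℚ) : ℚ := p.sum fun n a => a * _root_.bernoulli n

lemma L_add (p q : Polynomial ℚ) : L (p + q) = L p + L q := by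
  unfold L
  exact Polynomial.sum_add_index p q _ (by simp) (by intros; ring)

lemma L_C_mul (a : ℚ) (p : Polynomial ℚ) : L (C a * p) = a * L p := by
  unfold L
  rw [← smul_eq_C_mul, Polynomial.sum_smul_index _ _ _ (by simp)]
  rw [Polynomial.sum_def, Polynomial.sum_def, Finset.mul_sum]
  exact Finset.sum_congr rfl (by intros; ring)

lemma L_monomial (n : ℕ) (a : ℚ) : L (monomial n a) = a * _root_.bernoulli n :=
  Polynomial.sum_monomial_index a _ (by simp)

lemma L_X_add_one_pow (n : ℕ) :
    L ((X + 1) ^ n) = _root_.bernoulli n + if n = 1 then 1 else 0 := by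
  unfold L
  have hdeg : ((X + 1 : Polynomial ℚ) ^ n).natDegree < n + 1 := by
    have h1 : ((X + 1 : Polynomial ℚ) ^ n).natDegree ≤ n * (X + 1 : Polynomial ℚ).natDegree :=
      natDegree_pow_le
    have h2 : (X + 1 : Polynomial ℚ).natDegree = 1 := by
      rw [show (1 : Polynomial ℚ) = C 1 from rfl]
      exact natDegree_X_add_C 1
    rw [h2, mul_one] at h1
    omega
  rw [Polynomial.sum_over_range' _ (by simp) (n+1) hdeg]
  simp only [Polynomial.coeff_X_add_one_pow]
  rw [Finset.sum_range_succ]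
  calc (∑ x ∈ range n, (↑(n.choose x)) * _root_.bernoulli x) + ↑(n.choose n) * _root_.bernoulli n
      = (if n = 1 then 1 else 0) + _root_.bernoulli n := by rw [_root_.sum_bernoulli n]; simp
    _ = _root_.bernoulli n + if n = 1 then 1 else 0 := by ring

lemma L_comp_X_add_one (p : Polynomial ℚ) :
    L (p.comp (X + 1)) = L p + p.coeff 1 := by
  induction p using Polynomial.induction_on' with
  | add p q hp hq => simp only [add_comp, L_add, coeff_add, hp, hq]; ring
  | monomial n a =>
    rw [monomial_comp, L_C_mul, L_X_add_one_pow, L_monomial, coeff_monomial]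
    by_cases h : n = 1 <;> simp [h] <;> ring

lemma bernoulli_odd_zero {n : ℕ} (h : Odd n) (h1 : 1 < n) : _root_.bernoulli n = 0 := by
  rw [bernoulli_eq_bernoulli'_of_ne_one (by omega)]
  exact bernoulli'_eq_zero_of_odd h h1

lemma L_comp_neg_X (p : Polynomial ℚ) :
    L (p.comp (-X)) = L p + p.coeff 1 := by
  induction p using Polynomial.induction_on' with
  | add p q hp hq => simp only [add_comp, L_add, coeff_add, hp, hq]; ring
  | monomial n a =>
    have : (monomial n a : Polynomial ℚ).comp (-X) = C ((-1)^n * a) * X ^ n := by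
      rw [monomial_comp]
      rw [neg_pow]
      simp [C_mul]
      ring
    rw [this]
    have hx : (X ^ n : Polynomial ℚ) = monomial n 1 := (Polynomial.X_pow_eq_monomial n)
    rw [hx, L_C_mul, L_monomial, L_monomial, coeff_monomial]
    rcases Nat.even_or_odd n with he | ho
    · rw [he.neg_one_pow]
      have : n ≠ 1 := by rintro rfl; exact (Nat.not_even_iff_odd.2 odd_one) he
      simp [this]
      try ring
    · by_cases h1 : n = 1
      · subst h1; norm_num [_root_.bernoulli_one]; try ring
      · rw [bernoulli_odd_zero ho (by rcases ho with ⟨k, hk⟩; omega), ho.neg_one_pow]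
        simp [h1]


-- degree bound
lemma natDegree_fz_le : ∀ m, (fz m).natDegree ≤ m := by
  intro m
  induction m using Nat.twoStepInduction with
  | zero => simp [fz]
  | one =>
    show (X + C 2 : Polynomial ℚ).natDegree ≤ 1
    exact (natDegree_X_add_C 2).le
  | more n ih ih1 =>
    show ((X + C 2) * fz (n+1) - fz n).natDegree ≤ n + 2
    refine (natDegree_sub_le _ _).trans ?_
    have h1 : ((X + C 2) * fz (n+1)).natDegree ≤ n + 2 := by
      refine natDegree_mul_le.trans ?_
      have : (X + C 2 : Polynomial ℚ).natDegree = 1 := natDegree_X_add_C 2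
      omega
    have h2 : (fz n).natDegree ≤ n + 2 := by omega
    simp [h1, h2]

lemma L_fz (m : ℕ) : L (fz m) = ∑ r ∈ range (m+1), (cz m r : ℚ) * _root_.bernoulli r := by
  unfold L
  rw [Polynomial.sum_over_range' _ (by simp) (m+1) (lt_of_le_of_lt (natDegree_fz_le m) (Nat.lt_succ_self m))]
  exact Finset.sum_congr rfl fun r _ => by rw [coeff_fz]

-- 2m * Bstar = L (fz m)
noncomputable def BsQ (m : ℕ) : ℚ :=
  ∑ r ∈ range (m+1), ((m + r).choose (2*r) : ℚ) * _root_.bernoulli r / (m + r)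

lemma cz_mul_q (m r : ℕ) (hr : r ≤ m + 1) :
    ((m:ℚ) + 1 + r) * (cz (m+1) r : ℚ) = 2 * ((m:ℚ)+1) * ((m+1+r).choose (2*r) : ℚ) := by
  have hc := Nat.choose_mul_succ_eq (m + r) (2*r)
  have hsub : m + r + 1 - 2*r = m + 1 - r := by omega
  rw [hsub] at hc
  have hcQ : ((m+r).choose (2*r) : ℚ) * ((m:ℚ)+r+1)
      = ((m+r+1).choose (2*r) : ℚ) * ((m:ℚ)+1-r) := by
    have := congrArg (fun x : ℕ => (x:ℚ)) hc
    push_cast [Nat.cast_sub hr] at this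
    linarith [this]
  have e : (cz (m+1) r : ℚ) = ((m+1+r).choose (2*r) : ℚ) + ((m+r).choose (2*r) : ℚ) := by
    simp only [cz]
    rw [show m + 1 + r - 1 = m + r from by omega]
    push_cast
    ring
  have hx : m + 1 + r = m + r + 1 := by omega
  rw [e, hx]
  linear_combination hcQ

lemma L_fz_eq_BsQ (m : ℕ) : L (fz (m+1)) = 2 * ((m:ℚ)+1) * BsQ (m+1) := by
  rw [L_fz, BsQ, Finset.mul_sum]
  refine Finset.sum_congr rfl fun r hr => ?_
  rw [Finset.mem_range] at hr
  have hr' : r ≤ m + 1 := by omega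
  have keyQ := cz_mul_q m r hr'
  have hne : ((m+1:ℕ):ℚ) + (r:ℚ) ≠ 0 := by positivity
  field_simp
  push_cast at keyQ ⊢
  linear_combination _root_.bernoulli r * keyQ

-- symmetry
lemma fz_symm : ∀ m, (fz m).comp (-X - C 4) = C ((-1)^m) * fz m := by
  intro m
  induction m using Nat.twoStepInduction with
  | zero => simp [fz]
  | one =>
    show (X + C 2 : Polynomial ℚ).comp (-X - C 4) = C ((-1)^1) * (X + C 2)
    simp only [add_comp, sub_comp, neg_comp, X_comp, C_comp]
    rw [show ((-1:ℚ))^1 = (-1:ℚ) by norm_num, map_neg, map_one,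
        show (C (4:ℚ) : Polynomial ℚ) = C 2 + C 2 by rw [← C_add]; norm_num]
    ring
  | more n ih ih1 =>
    show ((X + C 2) * fz (n+1) - fz n).comp (-X - C 4) = C ((-1)^(n+2)) * ((X + C 2) * fz (n+1) - fz n)
    rw [sub_comp, mul_comp, add_comp, X_comp, C_comp, ih, ih1]
    rw [show ((-1 : ℚ))^(n+1) = -(-1)^n by ring, show ((-1 : ℚ))^(n+2) = (-1)^n by ring]
    simp only [map_neg, map_ofNat]
    ring

lemma fz_comp_X_sub_four (m : ℕ) :
    (fz m).comp (X - C 4) = C ((-1)^m) * ((fz m).comp (-X)) := by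
  have h : ((-X - C 4 : Polynomial ℚ)).comp (-X) = X - C 4 := by
    simp [sub_comp, neg_comp, X_comp, C_comp]
  calc (fz m).comp (X - C 4) = ((fz m).comp (-X - C 4)).comp (-X) := by
        rw [Polynomial.comp_assoc, h]
    _ = (C ((-1)^m) * fz m).comp (-X) := by rw [fz_symm]
    _ = C ((-1)^m) * ((fz m).comp (-X)) := by rw [mul_comp, C_comp]

-- step lemma
lemma L_step (p : Polynomial ℚ) (a : ℚ) :
    L (p.comp (X - C a)) = L (p.comp (X - C (a+1))) + (derivative p).eval (-(a+1)) := by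
  have hcomp : (p.comp (X - C (a+1))).comp (X + 1) = p.comp (X - C a) := by
    rw [Polynomial.comp_assoc]
    congr 1
    simp only [sub_comp, add_comp, X_comp, C_comp]
    rw [show (C (a+1) : Polynomial ℚ) = C a + 1 by rw [map_add, map_one]]
    ring
  have hL := L_comp_X_add_one (p.comp (X - C (a+1)))
  rw [hcomp] at hL
  rw [hL]
  congr 1
  have hder : derivative (p.comp (X - C (a+1))) = (derivative p).comp (X - C (a+1)) := by
    rw [derivative_comp]
    simp
  rw [show (p.comp (X - C (a+1))).coeff 1 = (derivative (p.comp (X - C (a+1)))).eval 0 by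
        rw [← Polynomial.coeff_zero_eq_eval_zero, Polynomial.coeff_derivative]; ring]
  rw [hder, eval_comp]
  simp

-- master identity
lemma master (m : ℕ) (hm : Odd m) :
    2 * L (fz m) = (derivative (fz m)).eval (-1) + (derivative (fz m)).eval (-2)
      + (derivative (fz m)).eval (-3) := by
  have hm1 : ((-1:ℚ))^m = -1 := hm.neg_one_pow
  -- chain
  have h0 : (fz m).comp (X - C 0) = fz m := by simp
  have s0 := L_step (fz m) 0
  have s1 := L_step (fz m) 1
  have s2 := L_step (fz m) 2
  have s3 := L_step (fz m) 3
  rw [h0] at s0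
  norm_num at s0 s1 s2 s3
  -- L (fz m ∘ (X - 4)) = -(L (fz m) + coeff 1)
  have hflip : L ((fz m).comp (X - C 4)) = -(L (fz m) + (fz m).coeff 1) := by
    rw [fz_comp_X_sub_four, L_C_mul, L_comp_neg_X, hm1]
    ring
  -- D(-4) = coeff 1
  have hD4 : (derivative (fz m)).eval (-4) = (fz m).coeff 1 := by
    have := congrArg derivative (fz_symm m)
    rw [derivative_comp, derivative_mul] at this
    simp only [derivative_C, zero_mul, zero_add] at this
    have h2 := congrArg (Polynomial.eval (0:ℚ)) this
    simp only [eval_mul, eval_comp, eval_sub, eval_neg, eval_X, eval_C] at h2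
    rw [hm1] at h2
    have : (derivative (fz m)).eval (0 : ℚ) = (fz m).coeff 1 := by
      rw [← Polynomial.coeff_zero_eq_eval_zero, Polynomial.coeff_derivative]; ring
    norm_num at h2
    rw [this] at h2
    linarith
  rw [s1, s2, s3, hflip] at s0
  rw [hD4] at s0
  norm_num at s0 ⊢
  linarith [s0]


lemma ev_rec (m : ℕ) (a : ℚ) :
    (fz (m+2)).eval a = (a+2) * (fz (m+1)).eval a - (fz m).eval a := by
  rw [show fz (m+2) = (X + C 2) * fz (m+1) - fz m from rfl]
  simp [eval_mul]
  try ring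

lemma dv_rec (m : ℕ) (a : ℚ) :
    (derivative (fz (m+2))).eval a
      = (fz (m+1)).eval a + (a+2) * (derivative (fz (m+1))).eval a
        - (derivative (fz m)).eval a := by
  rw [show fz (m+2) = (X + C 2) * fz (m+1) - fz m from rfl]
  rw [derivative_sub, derivative_mul]
  simp [eval_mul]
  try ring

lemma ev_zero (a : ℚ) : (fz 0).eval a = 2 := by simp [fz]
lemma ev_one (a : ℚ) : (fz 1).eval a = a + 2 := by simp [fz]
lemma dv_zero (a : ℚ) : (derivative (fz 0)).eval a = 0 := by simp [fz]
lemma dv_one (a : ℚ) : (derivative (fz 1)).eval a = 1 := by simp [fz]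

-- values at -2
lemma at_neg_two : ∀ k : ℕ, (fz (2*k)).eval (-2) = (-1)^k * 2 ∧ (fz (2*k+1)).eval (-2) = 0
    ∧ (derivative (fz (2*k+1))).eval (-2) = (-1)^k * (2*k+1) := by
  intro k
  induction k with
  | zero => norm_num [ev_zero, ev_one, dv_one]
  | succ k ih =>
    obtain ⟨h1, h2, h3⟩ := ih
    have i2 : 2*(k+1)+1 = 2*k+1+2 := by ring
    have i1 : 2*(k+1) = 2*k+2 := by ring
    rw [i2, i1]
    have e2 : (fz (2*k+2)).eval (-2) = -((-1)^k*2) := by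
      rw [ev_rec, h2, h1]; ring
    refine ⟨by rw [e2]; ring, ?_, ?_⟩
    · rw [ev_rec, h2]; ring
    · rw [dv_rec, show 2*k+1+1 = 2*k+2 from by ring, e2, h3]
      push_cast
      ring

-- values at -1 (pattern of period 6)
lemma at_neg_one : ∀ k : ℕ,
    (fz (6*k)).eval (-1) = 2 ∧ (fz (6*k+1)).eval (-1) = 1
    ∧ (derivative (fz (6*k))).eval (-1) = 0
    ∧ (derivative (fz (6*k+1))).eval (-1) = 6*k+1
    ∧ (derivative (fz (6*k+3))).eval (-1) = 0
    ∧ (derivative (fz (6*k+5))).eval (-1) = -(6*(k:ℚ)+5) := by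
  intro k
  induction k with
  | zero =>
    have e2 : (fz 2).eval (-1) = -1 := by rw [show (2:ℕ) = 0+2 from rfl, ev_rec, ev_one, ev_zero]; norm_num
    have e3 : (fz 3).eval (-1) = -2 := by rw [show (3:ℕ) = 1+2 from rfl, ev_rec, e2, ev_one]; norm_num
    have e4 : (fz 4).eval (-1) = -1 := by rw [show (4:ℕ) = 2+2 from rfl, ev_rec, e3, e2]; norm_num
    have d2 : (derivative (fz 2)).eval (-1) = 2 := by
      rw [show (2:ℕ) = 0+2 from rfl, dv_rec, ev_one, dv_one, dv_zero]; norm_num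
    have d3 : (derivative (fz 3)).eval (-1) = 0 := by
      rw [show (3:ℕ) = 1+2 from rfl, dv_rec, e2, d2, dv_one]; norm_num
    have d4 : (derivative (fz 4)).eval (-1) = -4 := by
      rw [show (4:ℕ) = 2+2 from rfl, dv_rec, e3, d3, d2]; norm_num
    have d5 : (derivative (fz 5)).eval (-1) = -5 := by
      rw [show (5:ℕ) = 3+2 from rfl, dv_rec, e4, d4, d3]; norm_num
    refine ⟨?_, ?_, ?_, ?_, ?_, ?_⟩ <;>
      norm_num [ev_zero, ev_one, dv_zero, dv_one, d3, d5]
  | succ k ih =>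
    obtain ⟨h0, h1, g0, g1, g3, g5⟩ := ih
    have e2 : (fz (6*k+2)).eval (-1) = -1 := by rw [ev_rec, h1, h0]; ring
    have e3 : (fz (6*k+3)).eval (-1) = -2 := by
      rw [show 6*k+3 = (6*k+1)+2 from by ring, ev_rec, e2, h1]; ring
    have e4 : (fz (6*k+4)).eval (-1) = -1 := by
      rw [show 6*k+4 = (6*k+2)+2 from by ring, ev_rec, e3, e2]; ring
    have e5 : (fz (6*k+5)).eval (-1) = 1 := by
      rw [show 6*k+5 = (6*k+3)+2 from by ring, ev_rec, e4, e3]; ring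
    have e6 : (fz (6*k+6)).eval (-1) = 2 := by
      rw [show 6*k+6 = (6*k+4)+2 from by ring, ev_rec, e5, e4]; ring
    have e7 : (fz (6*k+7)).eval (-1) = 1 := by
      rw [show 6*k+7 = (6*k+5)+2 from by ring, ev_rec, e6, e5]; ring
    have e8 : (fz (6*k+8)).eval (-1) = -1 := by
      rw [show 6*k+8 = (6*k+6)+2 from by ring, ev_rec, e7, e6]; ring
    have e9 : (fz (6*k+9)).eval (-1) = -2 := by
      rw [show 6*k+9 = (6*k+7)+2 from by ring, ev_rec, e8, e7]; ring
    have e10 : (fz (6*k+10)).eval (-1) = -1 := by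
      rw [show 6*k+10 = (6*k+8)+2 from by ring, ev_rec, e9, e8]; ring
    have d2 : (derivative (fz (6*k+2))).eval (-1) = 6*k+2 := by rw [dv_rec, h1, g1, g0]; ring
    have d4 : (derivative (fz (6*k+4))).eval (-1) = -(6*(k:ℚ)+4) := by
      rw [show 6*k+4 = (6*k+2)+2 from by ring, dv_rec, e3, g3, d2]; ring
    have d6 : (derivative (fz (6*k+6))).eval (-1) = 0 := by
      rw [show 6*k+6 = (6*k+4)+2 from by ring, dv_rec, e5, g5, d4]; ring
    have d7 : (derivative (fz (6*k+7))).eval (-1) = 6*k+7 := by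
      rw [show 6*k+7 = (6*k+5)+2 from by ring, dv_rec, e6, d6, g5]; ring
    have d8 : (derivative (fz (6*k+8))).eval (-1) = 6*k+8 := by
      rw [show 6*k+8 = (6*k+6)+2 from by ring, dv_rec, e7, d7, d6]; ring
    have d9 : (derivative (fz (6*k+9))).eval (-1) = 0 := by
      rw [show 6*k+9 = (6*k+7)+2 from by ring, dv_rec, e8, d8, d7]; ring
    have d10 : (derivative (fz (6*k+10))).eval (-1) = -(6*(k:ℚ)+10) := by
      rw [show 6*k+10 = (6*k+8)+2 from by ring, dv_rec, e9, d9, d8]; ring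
    have d11 : (derivative (fz (6*k+11))).eval (-1) = -(6*(k:ℚ)+11) := by
      rw [show 6*k+11 = (6*k+9)+2 from by ring, dv_rec, e10, d10, d9]; ring
    refine ⟨?_, ?_, ?_, ?_, ?_, ?_⟩
    · rw [show 6*(k+1) = 6*k+6 from by ring]; exact e6
    · rw [show 6*(k+1)+1 = 6*k+7 from by ring]; exact e7
    · rw [show 6*(k+1) = 6*k+6 from by ring]; exact d6
    · rw [show 6*(k+1)+1 = 6*k+7 from by ring, d7]; push_cast; ring
    · rw [show 6*(k+1)+3 = 6*k+9 from by ring]; exact d9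
    · rw [show 6*(k+1)+5 = 6*k+11 from by ring, d11]; push_cast; ring

-- values at -3 (pattern of period 6)
lemma at_neg_three : ∀ k : ℕ,
    (fz (6*k)).eval (-3) = 2 ∧ (fz (6*k+1)).eval (-3) = -1
    ∧ (derivative (fz (6*k))).eval (-3) = 0
    ∧ (derivative (fz (6*k+1))).eval (-3) = 6*k+1
    ∧ (derivative (fz (6*k+3))).eval (-3) = 0
    ∧ (derivative (fz (6*k+5))).eval (-3) = -(6*(k:ℚ)+5) := by
  intro k
  induction k with
  | zero =>
    have e2 : (fz 2).eval (-3) = -1 := by rw [show (2:ℕ) = 0+2 from rfl, ev_rec, ev_one, ev_zero]; norm_num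
    have e3 : (fz 3).eval (-3) = 2 := by rw [show (3:ℕ) = 1+2 from rfl, ev_rec, e2, ev_one]; norm_num
    have e4 : (fz 4).eval (-3) = -1 := by rw [show (4:ℕ) = 2+2 from rfl, ev_rec, e3, e2]; norm_num
    have d2 : (derivative (fz 2)).eval (-3) = -2 := by
      rw [show (2:ℕ) = 0+2 from rfl, dv_rec, ev_one, dv_one, dv_zero]; norm_num
    have d3 : (derivative (fz 3)).eval (-3) = 0 := by
      rw [show (3:ℕ) = 1+2 from rfl, dv_rec, e2, d2, dv_one]; norm_num
    have d4 : (derivative (fz 4)).eval (-3) = 4 := by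
      rw [show (4:ℕ) = 2+2 from rfl, dv_rec, e3, d3, d2]; norm_num
    have d5 : (derivative (fz 5)).eval (-3) = -5 := by
      rw [show (5:ℕ) = 3+2 from rfl, dv_rec, e4, d4, d3]; norm_num
    refine ⟨?_, ?_, ?_, ?_, ?_, ?_⟩ <;>
      norm_num [ev_zero, ev_one, dv_zero, dv_one, d3, d5]
  | succ k ih =>
    obtain ⟨h0, h1, g0, g1, g3, g5⟩ := ih
    have e2 : (fz (6*k+2)).eval (-3) = -1 := by rw [ev_rec, h1, h0]; ring
    have e3 : (fz (6*k+3)).eval (-3) = 2 := by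
      rw [show 6*k+3 = (6*k+1)+2 from by ring, ev_rec, e2, h1]; ring
    have e4 : (fz (6*k+4)).eval (-3) = -1 := by
      rw [show 6*k+4 = (6*k+2)+2 from by ring, ev_rec, e3, e2]; ring
    have e5 : (fz (6*k+5)).eval (-3) = -1 := by
      rw [show 6*k+5 = (6*k+3)+2 from by ring, ev_rec, e4, e3]; ring
    have e6 : (fz (6*k+6)).eval (-3) = 2 := by
      rw [show 6*k+6 = (6*k+4)+2 from by ring, ev_rec, e5, e4]; ring
    have e7 : (fz (6*k+7)).eval (-3) = -1 := by
      rw [show 6*k+7 = (6*k+5)+2 from by ring, ev_rec, e6, e5]; ring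
    have e8 : (fz (6*k+8)).eval (-3) = -1 := by
      rw [show 6*k+8 = (6*k+6)+2 from by ring, ev_rec, e7, e6]; ring
    have e9 : (fz (6*k+9)).eval (-3) = 2 := by
      rw [show 6*k+9 = (6*k+7)+2 from by ring, ev_rec, e8, e7]; ring
    have e10 : (fz (6*k+10)).eval (-3) = -1 := by
      rw [show 6*k+10 = (6*k+8)+2 from by ring, ev_rec, e9, e8]; ring
    have d2 : (derivative (fz (6*k+2))).eval (-3) = -(6*(k:ℚ)+2) := by rw [dv_rec, h1, g1, g0]; ring
    have d4 : (derivative (fz (6*k+4))).eval (-3) = 6*k+4 := by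
      rw [show 6*k+4 = (6*k+2)+2 from by ring, dv_rec, e3, g3, d2]; ring
    have d6 : (derivative (fz (6*k+6))).eval (-3) = 0 := by
      rw [show 6*k+6 = (6*k+4)+2 from by ring, dv_rec, e5, g5, d4]; ring
    have d7 : (derivative (fz (6*k+7))).eval (-3) = 6*k+7 := by
      rw [show 6*k+7 = (6*k+5)+2 from by ring, dv_rec, e6, d6, g5]; ring
    have d8 : (derivative (fz (6*k+8))).eval (-3) = -(6*(k:ℚ)+8) := by
      rw [show 6*k+8 = (6*k+6)+2 from by ring, dv_rec, e7, d7, d6]; ring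
    have d9 : (derivative (fz (6*k+9))).eval (-3) = 0 := by
      rw [show 6*k+9 = (6*k+7)+2 from by ring, dv_rec, e8, d8, d7]; ring
    have d10 : (derivative (fz (6*k+10))).eval (-3) = 6*k+10 := by
      rw [show 6*k+10 = (6*k+8)+2 from by ring, dv_rec, e9, d9, d8]; ring
    have d11 : (derivative (fz (6*k+11))).eval (-3) = -(6*(k:ℚ)+11) := by
      rw [show 6*k+11 = (6*k+9)+2 from by ring, dv_rec, e10, d10, d9]; ring
    refine ⟨?_, ?_, ?_, ?_, ?_, ?_⟩
    · rw [show 6*(k+1) = 6*k+6 from by ring]; exact e6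
    · rw [show 6*(k+1)+1 = 6*k+7 from by ring]; exact e7
    · rw [show 6*(k+1) = 6*k+6 from by ring]; exact d6
    · rw [show 6*(k+1)+1 = 6*k+7 from by ring, d7]; push_cast; ring
    · rw [show 6*(k+1)+3 = 6*k+9 from by ring]; exact d9
    · rw [show 6*(k+1)+5 = 6*k+11 from by ring, d11]; push_cast; ring


lemma BsQ_odd (n : ℕ) :
    BsQ (2*n+1) = (-1)^n/4
      + (if n % 3 = 0 then (1:ℚ)/2 else if n % 3 = 1 then 0 else -1/2) := by
  have hL : L (fz (2*n+1)) = 2*(2*(n:ℚ)+1) * BsQ (2*n+1) := by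
    have h := L_fz_eq_BsQ (2*n)
    rw [h]
    push_cast
    ring
  have hM := master (2*n+1) ⟨n, by ring⟩
  have hD2 : (derivative (fz (2*n+1))).eval (-2) = (-1)^n * (2*(n:ℚ)+1) := (at_neg_two n).2.2
  have h4 : (4*(2*(n:ℚ)+1)) ≠ 0 := by positivity
  have ht : n % 3 < 3 := Nat.mod_lt _ (by norm_num)
  set q := n / 3 with hq
  interval_cases h : n % 3
  · have hi : 2*n+1 = 6*q+1 := by omega
    have hq6 : 6*(q:ℚ)+1 = 2*(n:ℚ)+1 := by
      have : (n:ℚ) = 3*q := by exact_mod_cast congrArg (fun x : ℕ => (x:ℚ)) (by omega : n = 3*q)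
      rw [this]; ring
    have hD1 := (at_neg_one q).2.2.2.1
    have hD3 := (at_neg_three q).2.2.2.1
    rw [hi] at hL hM hD2 ⊢
    rw [hD1, hD2, hD3, hL, hq6] at hM
    norm_num
    apply mul_left_cancel₀ h4
    linear_combination hM
  · have hi : 2*n+1 = 6*q+3 := by omega
    have hD1 := (at_neg_one q).2.2.2.2.1
    have hD3 := (at_neg_three q).2.2.2.2.1
    rw [hi] at hL hM hD2 ⊢
    rw [hD1, hD2, hD3, hL] at hM
    norm_num
    apply mul_left_cancel₀ h4
    linear_combination hM
  · have hi : 2*n+1 = 6*q+5 := by omega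
    have hq6 : 6*(q:ℚ)+5 = 2*(n:ℚ)+1 := by
      have h2 : n = 3*q+2 := by omega
      rw [h2]; push_cast; ring
    have hD1 := (at_neg_one q).2.2.2.2.2
    have hD3 := (at_neg_three q).2.2.2.2.2
    rw [hi] at hL hM hD2 ⊢
    rw [hD1, hD2, hD3, hL, hq6] at hM
    norm_num
    apply mul_left_cancel₀ h4
    linear_combination hM

end ZagierAux

open ZagierAux

theorem zagierBstar_odd_closed_form (n : ℕ) (hn : 0 < n) :
    zagierBstar (2 * n + 1) =
      (-1 : ℝ) ^ n / 4 + (1 / Real.sqrt 3) * Real.sin ((2 * n + 1) * Real.pi / 3) := by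
  have hcast : zagierBstar (2*n+1) = ((BsQ (2*n+1) : ℚ) : ℝ) := by
    unfold zagierBstar ZagierAux.BsQ
    push_cast
    rfl
  have hs3 : Real.sqrt 3 ≠ 0 := by positivity
  have hs3' : Real.sqrt 3 * Real.sqrt 3 = 3 := Real.mul_self_sqrt (by norm_num)
  have hsin : Real.sin ((2 * (n:ℝ) + 1) * Real.pi / 3)
      = Real.sin ((2 * ((n % 3 : ℕ):ℝ) + 1) * Real.pi / 3) := by
    have hn3 : n = 3*(n/3) + n % 3 := by omega
    have harg : (2 * (n:ℝ) + 1) * Real.pi / 3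
        = (2 * ((n % 3 : ℕ):ℝ) + 1) * Real.pi / 3 + (n/3 : ℕ) * (2*Real.pi) := by
      rw [show ((n:ℝ)) = 3*((n/3 : ℕ):ℝ) + ((n % 3 : ℕ):ℝ) by
        exact_mod_cast congrArg (fun x : ℕ => (x:ℝ)) hn3]
      ring
    rw [harg, Real.sin_add_nat_mul_two_pi]
  rw [hcast, BsQ_odd]
  have ht : n % 3 < 3 := Nat.mod_lt _ (by norm_num)
  have hhalf : (1/Real.sqrt 3) * (Real.sqrt 3/2) = 1/2 := by
    field_simp
  interval_cases h : n % 3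
  · rw [hsin]
    rw [show (2 * ((0:ℕ):ℝ) + 1) * Real.pi / 3 = Real.pi/3 by push_cast; ring]
    rw [Real.sin_pi_div_three, hhalf]
    norm_num
  · rw [hsin]
    rw [show (2 * ((1:ℕ):ℝ) + 1) * Real.pi / 3 = Real.pi by push_cast; ring]
    rw [Real.sin_pi]
    norm_num
  · rw [hsin]
    rw [show (2 * ((2:ℕ):ℝ) + 1) * Real.pi / 3 = -(Real.pi/3) + 2*Real.pi by push_cast; ring]
    rw [Real.sin_add_two_pi, Real.sin_neg, Real.sin_pi_div_three, mul_neg, hhalf]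
    norm_num
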